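/- Let G be a countable discrete group admitting a paradoxical decomposition: there exist elements s_1,…,s_n, t_1,…,t_m ∈ G and pairwise disjoint subsets A_1,…,A_n, B_1,…,B_m ⊆ G such that the translates s_1A_1,…,s_nA_n form a partition of G and the translates t_1B_1,…,t_mB_m form a partition of G. Then it is NOT the case that for every finite family of bounded functions f_1,…,f_N: G → ℂ there exists a state τ on ℓ∞(G) such that each function x ↦ τ_y( f_i(xy) · conj(f_i(y)) ) is positive definite on G. -/
import Mathlib


open scoped ComplexOrder Pointwise

/-- `f : G → ℂ` is bounded, i.e. `f ∈ ℓ∞(G)`. -/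
def IsBddFun {G : Type*} (f : G → ℂ) : Prop := ∃ C : ℝ, ∀ x, ‖f x‖ ≤ C

/-- A state on `ℓ∞(G)`: a positive unital linear functional, encoded as a functional on
all functions `G → ℂ` whose linearity, positivity and unitality are imposed on bounded
functions. -/
structure LinftyState (G : Type*) where
  toFun : (G → ℂ) → ℂ
  map_add : ∀ f g : G → ℂ, IsBddFun f → IsBddFun g → toFun (f + g) = toFun f + toFun g
  map_smul : ∀ (c : ℂ) (f : G → ℂ), IsBddFun f → toFun (c • f) = c * toFun f
  pos : ∀ f : G → ℂ, IsBddFun f → (∀ x, 0 ≤ f x) → 0 ≤ toFun f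
  unital : toFun (fun _ => (1 : ℂ)) = 1

/-- A function `ψ : G → ℂ` is positive definite. -/
def PosDefFun {G : Type*} [Group G] (ψ : G → ℂ) : Prop :=
  ∀ (n : ℕ) (x : Fin n → G) (c : Fin n → ℂ),
    0 ≤ ∑ i, ∑ j, (starRingEnd ℂ) (c i) * c j * ψ ((x i)⁻¹ * x j)

/-- A finitely supported probability measure on `G`. -/
structure FinProb (G : Type*) where
  w : G →₀ ℝ
  nonneg : ∀ y, 0 ≤ w y
  sum_one : w.sum (fun _ r => r) = 1

open scoped Classical

namespace Stmt8Aux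
variable {G : Type*}

noncomputable def ind (C : Set G) : G → ℂ := fun y => if y ∈ C then 1 else 0

lemma ind_bdd (C : Set G) : IsBddFun (ind C) := by
  refine ⟨1, fun x => ?_⟩
  unfold ind; split_ifs <;> simp

lemma ind_nonneg (C : Set G) (y : G) : 0 ≤ ind C y := by
  unfold ind; split_ifs <;> simp

lemma bdd_add {f g : G → ℂ} (hf : IsBddFun f) (hg : IsBddFun g) : IsBddFun (f + g) := by
  obtain ⟨Cf, hCf⟩ := hf; obtain ⟨Cg, hCg⟩ := hg
  exact ⟨Cf + Cg, fun x => (norm_add_le _ _).trans (add_le_add (hCf x) (hCg x))⟩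

lemma bdd_smul (c : ℂ) {f : G → ℂ} (hf : IsBddFun f) : IsBddFun (c • f) := by
  obtain ⟨Cf, hCf⟩ := hf
  refine ⟨‖c‖ * Cf, fun x => ?_⟩
  simp only [Pi.smul_apply, smul_eq_mul, norm_mul]
  exact mul_le_mul_of_nonneg_left (hCf x) (norm_nonneg c)

lemma bdd_zero : IsBddFun (0 : G → ℂ) := ⟨0, fun x => by simp⟩

lemma bdd_sum {ι : Type*} (s : Finset ι) (g : ι → G → ℂ) (hg : ∀ i, IsBddFun (g i)) :
    IsBddFun (∑ i ∈ s, g i) := by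
  classical
  induction s using Finset.cons_induction with
  | empty => simpa using bdd_zero
  | cons a s ha ih => rw [Finset.sum_cons]; exact bdd_add (hg a) ih

lemma state_zero (τ : LinftyState G) : τ.toFun 0 = 0 := by
  have h := τ.map_smul 0 (ind ∅) (ind_bdd _)
  simpa using h

lemma state_sum {ι : Type*} (τ : LinftyState G) (s : Finset ι) (g : ι → G → ℂ)
    (hg : ∀ i, IsBddFun (g i)) :
    τ.toFun (∑ i ∈ s, g i) = ∑ i ∈ s, τ.toFun (g i) := by
  classical
  induction s using Finset.cons_induction with
  | empty => simpa using state_zero τ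
  | cons a s ha ih =>
      rw [Finset.sum_cons, τ.map_add _ _ (hg a) (bdd_sum s g hg), ih, Finset.sum_cons]

lemma ind_iUnion {k : ℕ} (E : Fin k → Set G)
    (hdis : ∀ i j, i ≠ j → Disjoint (E i) (E j)) :
    ind (⋃ i, E i) = ∑ i, ind (E i) := by
  funext y
  by_cases hy : y ∈ ⋃ i, E i
  · obtain ⟨i, hi⟩ := Set.mem_iUnion.1 hy
    have h1 : ind (⋃ i, E i) y = 1 := by simp [ind, hy]
    rw [h1, Finset.sum_apply]
    rw [Finset.sum_eq_single i]
    · simp [ind, hi]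
    · intro j _ hj
      have : y ∉ E j := fun hyj => Set.disjoint_left.mp (hdis j i hj) hyj hi
      simp [ind, this]
    · simp
  · have h1 : ind (⋃ i, E i) y = 0 := by simp [ind, hy]
    rw [h1, Finset.sum_apply]
    refine (Finset.sum_eq_zero fun j _ => ?_).symm
    have : y ∉ E j := fun hyj => hy (Set.mem_iUnion.2 ⟨j, hyj⟩)
    simp [ind, this]

lemma mu_union {k : ℕ} (τ : LinftyState G) (E : Fin k → Set G)
    (hdis : ∀ i j, i ≠ j → Disjoint (E i) (E j)) :
    τ.toFun (ind (⋃ i, E i)) = ∑ i, τ.toFun (ind (E i)) := by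
  rw [ind_iUnion E hdis, state_sum τ _ _ (fun i => ind_bdd _)]

lemma ind_univ : ind (Set.univ : Set G) = fun _ => (1:ℂ) := by
  funext y; simp [ind]

lemma mu_partition {k : ℕ} (τ : LinftyState G) (E : Fin k → Set G)
    (hdis : ∀ i j, i ≠ j → Disjoint (E i) (E j)) (huniv : (⋃ i, E i) = Set.univ) :
    ∑ i, τ.toFun (ind (E i)) = 1 := by
  rw [← mu_union τ E hdis, huniv, ind_univ, τ.unital]

lemma mu_compl (τ : LinftyState G) (U : Set G) :
    τ.toFun (ind U) + τ.toFun (ind Uᶜ) = 1 := by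
  have h : ind U + ind Uᶜ = fun _ => (1:ℂ) := by
    funext y; by_cases hy : y ∈ U <;> simp [ind, hy]
  rw [← τ.unital, ← h, τ.map_add _ _ (ind_bdd _) (ind_bdd _)]

lemma pd_conj [Group G] {ψ : G → ℂ} (h : PosDefFun ψ) (x : G) :
    ψ x⁻¹ = (starRingEnd ℂ) (ψ x) := by
  have h1 := h 1 (fun _ => (1:G)) (fun _ => 1)
  have h2 := h 2 ![1, x] ![1, 1]
  have h3 := h 2 ![1, x] ![1, Complex.I]
  simp [Fin.sum_univ_two, Fin.sum_univ_one] at h1 h2 h3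
  rw [Complex.nonneg_iff] at h1 h2 h3
  have e0 : (ψ 1).im = 0 := h1.2.symm
  have e2 := h2.2
  have e3 := h3.2
  simp [Complex.add_im, Complex.mul_im, e0] at e2 e3
  apply Complex.ext <;> simp [Complex.conj_re, Complex.conj_im] <;> linarith

lemma ind_inter (E F : Set G) (y : G) : ind (E ∩ F) y = ind E y * ind F y := by
  simp only [ind, Set.mem_inter_iff]
  split_ifs <;> simp_all

lemma ind_shift [Group G] (C : Set G) (x y : G) : ind C (x * y) = ind (x⁻¹ • C) y := by
  simp only [ind, Set.mem_inv_smul_set_iff, smul_eq_mul]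

lemma conj_ind (C : Set G) (y : G) : (starRingEnd ℂ) (ind C y) = ind C y := by
  simp only [ind, apply_ite (starRingEnd ℂ), map_one, map_zero]

lemma key [Group G] (τ : LinftyState G) (C D : Set G) (z : ℂ) (x : G) :
    τ.toFun (fun y => (ind C (x*y) + z * ind D (x*y)) * (starRingEnd ℂ) (ind C y + z * ind D y))
    = τ.toFun (ind (x⁻¹ • C ∩ C)) + (starRingEnd ℂ) z * τ.toFun (ind (x⁻¹ • C ∩ D))
      + z * τ.toFun (ind (x⁻¹ • D ∩ C)) + (z * (starRingEnd ℂ) z) * τ.toFun (ind (x⁻¹ • D ∩ D)) := by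
  have hfe : (fun y => (ind C (x*y) + z * ind D (x*y)) * (starRingEnd ℂ) (ind C y + z * ind D y))
      = ind (x⁻¹ • C ∩ C) + ((starRingEnd ℂ) z • ind (x⁻¹ • C ∩ D)
        + (z • ind (x⁻¹ • D ∩ C) + (z * (starRingEnd ℂ) z) • ind (x⁻¹ • D ∩ D))) := by
    funext y
    simp only [Pi.add_apply, Pi.smul_apply, smul_eq_mul, ind_inter, ind_shift, map_add, map_mul,
      conj_ind]
    ring
  rw [hfe, τ.map_add _ _ (ind_bdd _) (bdd_add (bdd_smul _ (ind_bdd _)) (bdd_add (bdd_smul _ (ind_bdd _)) (bdd_smul _ (ind_bdd _)))),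
    τ.map_add _ _ (bdd_smul _ (ind_bdd _)) (bdd_add (bdd_smul _ (ind_bdd _)) (bdd_smul _ (ind_bdd _))),
    τ.map_add _ _ (bdd_smul _ (ind_bdd _)) (bdd_smul _ (ind_bdd _)),
    τ.map_smul _ _ (ind_bdd _), τ.map_smul _ _ (ind_bdd _), τ.map_smul _ _ (ind_bdd _)]
  ring

lemma mu_re (τ : LinftyState G) (E : Set G) : ∃ r : ℝ, τ.toFun (ind E) = (r : ℂ) := by
  have h := τ.pos (ind E) (ind_bdd E) (ind_nonneg E)
  rw [Complex.nonneg_iff] at h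
  exact ⟨(τ.toFun (ind E)).re, by apply Complex.ext <;> simp [h.2.symm]⟩

lemma mu_eq [Group G] (τ : LinftyState G) (C : Set G) (σ : G)
    (h1 : PosDefFun fun x => τ.toFun fun y =>
      (ind C (x*y) + (1:ℂ) * ind (σ • C) (x*y)) * (starRingEnd ℂ) (ind C y + (1:ℂ) * ind (σ • C) y))
    (hI : PosDefFun fun x => τ.toFun fun y =>
      (ind C (x*y) + Complex.I * ind (σ • C) (x*y)) * (starRingEnd ℂ) (ind C y + Complex.I * ind (σ • C) y)) :
    τ.toFun (ind C) = τ.toFun (ind (σ • C)) := by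
  have e1 := pd_conj h1 σ
  have eI := pd_conj hI σ
  simp only [key, inv_inv, inv_smul_smul, Set.inter_self] at e1 eI
  rw [Set.inter_comm (σ • C) C] at e1 eI
  obtain ⟨c, hc⟩ := mu_re τ (C ∩ σ • C)
  obtain ⟨q, hq⟩ := mu_re τ (σ • C)
  obtain ⟨d, hd⟩ := mu_re τ (σ • (σ • C) ∩ C)
  obtain ⟨e, he⟩ := mu_re τ (σ • (σ • C) ∩ σ • C)
  obtain ⟨al, hal⟩ := mu_re τ (σ⁻¹ • C ∩ C)
  obtain ⟨b, hb⟩ := mu_re τ (σ⁻¹ • C ∩ σ • C)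
  obtain ⟨p, hp⟩ := mu_re τ C
  rw [hc, hq, hd, he, hal, hb, hp] at e1 eI
  rw [hp, hq]
  rw [Complex.ext_iff] at e1 eI ⊢
  simp [Complex.conj_I] at e1 eI ⊢
  linarith [eI.1, eI.2, e1]

end Stmt8Aux

open Stmt8Aux

/-- If a countable discrete group `G` admits a paradoxical decomposition
(pairwise disjoint subsets `A₁,…,Aₙ, B₁,…,B_m` whose translates `sⱼAⱼ` partition `G` and
whose translates `t_k B_k` partition `G`), then it is not the case that every finite family
of bounded functions `f₁,…,f_N : G → ℂ` admits a state `τ` on `ℓ∞(G)` making each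
`x ↦ τ_y(fᵢ(xy) conj(fᵢ(y)))` positive definite. -/
theorem stmt_8 (G : Type*) [Group G] [Countable G]
    (n m : ℕ) (s : Fin n → G) (t : Fin m → G) (A : Fin n → Set G) (B : Fin m → Set G)
    (hA : ∀ i j, i ≠ j → Disjoint (A i) (A j))
    (hB : ∀ i j, i ≠ j → Disjoint (B i) (B j))
    (hAB : ∀ i j, Disjoint (A i) (B j))
    (hApart : (∀ i j, i ≠ j → Disjoint (s i • A i) (s j • A j)) ∧
      (⋃ i, s i • A i) = Set.univ)
    (hBpart : (∀ i j, i ≠ j → Disjoint (t i • B i) (t j • B j)) ∧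
      (⋃ i, t i • B i) = Set.univ) :
    ¬ (∀ (N : ℕ) (f : Fin N → G → ℂ), (∀ i, IsBddFun (f i)) →
        ∃ τ : LinftyState G, ∀ i : Fin N,
          PosDefFun (fun x => τ.toFun (fun y => f i (x * y) * (starRingEnd ℂ) (f i y)))) := by
  intro H
  set CC : Fin (n + m) → Set G := Fin.append A B with hCCdef
  set σ : Fin (n + m) → G := Fin.append s t with hσdef
  set F1 : Fin (n + m) → G → ℂ :=
    fun i => fun y => ind (CC i) y + (1:ℂ) * ind (σ i • CC i) y with hF1def
  set F2 : Fin (n + m) → G → ℂ :=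
    fun i => fun y => ind (CC i) y + Complex.I * ind (σ i • CC i) y with hF2def
  have hbdd : ∀ i, IsBddFun (Fin.append F1 F2 i) := by
    refine Fin.addCases (fun i => ?_) (fun i => ?_)
    · rw [Fin.append_left]
      exact bdd_add (ind_bdd _) (bdd_smul _ (ind_bdd _))
    · rw [Fin.append_right]
      exact bdd_add (ind_bdd _) (bdd_smul _ (ind_bdd _))
  obtain ⟨τ, hτ⟩ := H ((n + m) + (n + m)) (Fin.append F1 F2) hbdd
  -- invariance for each piece
  have hmu : ∀ i : Fin (n + m), τ.toFun (ind (CC i)) = τ.toFun (ind (σ i • CC i)) := by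
    intro i
    have h1 := hτ (Fin.castAdd (n + m) i)
    have h2 := hτ (Fin.natAdd (n + m) i)
    simp only [Fin.append_left, Fin.append_right, hF1def, hF2def] at h1 h2
    exact mu_eq τ (CC i) (σ i) h1 h2
  -- partition sums
  have S1 : ∑ i : Fin n, τ.toFun (ind (s i • A i)) = 1 :=
    mu_partition τ _ hApart.1 hApart.2
  have S2 : ∑ i : Fin m, τ.toFun (ind (t i • B i)) = 1 :=
    mu_partition τ _ hBpart.1 hBpart.2
  -- pairwise disjointness of the combined family
  have hCC : ∀ i j : Fin (n + m), i ≠ j → Disjoint (CC i) (CC j) := by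
    intro i j
    refine Fin.addCases (fun i' => Fin.addCases (fun j' => ?_) (fun j' => ?_) j)
      (fun i' => Fin.addCases (fun j' => ?_) (fun j' => ?_) j) i <;> intro hij <;>
      simp only [hCCdef, Fin.append_left, Fin.append_right]
    · exact hA i' j' (fun h => hij (by rw [h]))
    · exact hAB i' j'
    · exact (hAB j' i').symm
    · exact hB i' j' (fun h => hij (by rw [h]))
  -- total mass computation
  have hsum : ∑ i : Fin (n + m), τ.toFun (ind (CC i)) = 2 := by
    have : ∑ i : Fin (n + m), τ.toFun (ind (CC i))
        = ∑ i : Fin (n + m), τ.toFun (ind (σ i • CC i)) := by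
      exact Finset.sum_congr rfl (fun i _ => hmu i)
    rw [this, Fin.sum_univ_add]
    have hl : ∀ i : Fin n, σ (Fin.castAdd m i) • CC (Fin.castAdd m i) = s i • A i := by
      intro i; simp [hσdef, hCCdef, Fin.append_left]
    have hr : ∀ i : Fin m, σ (Fin.natAdd n i) • CC (Fin.natAdd n i) = t i • B i := by
      intro i; simp [hσdef, hCCdef, Fin.append_right]
    have e1 : ∑ i : Fin n, τ.toFun (ind (σ (Fin.castAdd m i) • CC (Fin.castAdd m i))) = 1 := by
      rw [Finset.sum_congr rfl (fun i _ => by rw [hl i])]; exact S1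
    have e2 : ∑ i : Fin m, τ.toFun (ind (σ (Fin.natAdd n i) • CC (Fin.natAdd n i))) = 1 := by
      rw [Finset.sum_congr rfl (fun i _ => by rw [hr i])]; exact S2
    rw [e1, e2]; norm_num
  have hU : τ.toFun (ind (⋃ i, CC i)) = 2 := by
    rw [mu_union τ CC hCC, hsum]
  have hcompl := mu_compl τ (⋃ i, CC i)
  have hpos := τ.pos (ind (⋃ i, CC i)ᶜ) (ind_bdd _) (ind_nonneg _)
  rw [hU] at hcompl
  have : τ.toFun (ind (⋃ i, CC i)ᶜ) = -1 := by linear_combination hcompl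
  rw [this, Complex.nonneg_iff] at hpos
  norm_num at hpos
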